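/- (Transverse convolution of surface measures on the cone.) Let n ≥ 2, let k ≥ 0 be an integer, and let r ≥ 2. Let ω₀ be a unit vector in ℝⁿ and let Γ := {ξ ∈ ℝⁿ : ∠(ξ, e₁) ≤ π/8, 1 ≤ |ξ| ≤ 2, ∠(ξ, ω₀) ≤ 1/r}. Let σ₁ be the measure on ℝ^{n+1} defined by ∫F dσ₁ = ∫_Γ F(ξ, |ξ|) dξ, and let σ₂ be the measure defined by ∫F dσ₂ = ∫_{{η : ∠(η,e₁) ≤ π/8, 2^k ≤ |η| ≤ 2^{k+1}}} F(η, −|η|) dη. Then the convolution σ₁ * σ₂ is absolutely continuous with respect to Lebesgue measure on ℝ^{n+1}, with density bounded by C r^{−(n−1)}, where C depends only on n. -/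

import Mathlib

open MeasureTheory Real InnerProductGeometry
open scoped ENNReal FourierTransform

noncomputable section

namespace ConeRestriction

/-- Spatial Euclidean space `ℝⁿ`. -/
abbrev Spc (n : ℕ) := EuclideanSpace ℝ (Fin n)

/-- The first standard basis vector `e₁` of `ℝⁿ`. -/
def e1 (n : ℕ) : Spc n :=
  if h : 0 < n then EuclideanSpace.single (⟨0, h⟩ : Fin n) (1 : ℝ) else 0

/-- The Euclidean distance on spacetime `ℝⁿ × ℝ = ℝ^{n+1}`. -/
def stDist {n : ℕ} (z w : Spc n × ℝ) : ℝ :=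
  Real.sqrt (‖z.1 - w.1‖ ^ 2 + (z.2 - w.2) ^ 2)

/-- The spatial projection of the frequency sector `2^m Σ^{red}` (the same set occurs as the
spatial projection of `2^m Σ^{blue}`). -/
def sector (n : ℕ) (m : ℤ) : Set (Spc n) :=
  {ξ | angle ξ (e1 n) ≤ π / 8 ∧ (2 : ℝ) ^ m ≤ ‖ξ‖ ∧ ‖ξ‖ ≤ (2 : ℝ) ^ (m + 1)}

/-- The region `Σ̲ = {ξ : 1/2 ≤ |ξ| ≤ 4, ∠(ξ,e₁) ≤ π/4}`. -/
def underlineSigma (n : ℕ) : Set (Spc n) :=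
  {ξ | 1 / 2 ≤ ‖ξ‖ ∧ ‖ξ‖ ≤ 4 ∧ angle ξ (e1 n) ≤ π / 4}

/-- The plane wave phase `e^{2πi(x·ξ + t|ξ|)}`. -/
def redPhase {n : ℕ} (ξ x : Spc n) (t : ℝ) : ℂ :=
  Complex.exp (2 * (π : ℂ) * Complex.I * (((inner ℝ x ξ : ℝ) + t * ‖ξ‖ : ℝ) : ℂ))

/-- General spacetime plane wave phase `e^{2πi(x·Ξ + tτ)}`. -/
def stPhase {n : ℕ} (Ξ : Spc n) (τ : ℝ) (z : Spc n × ℝ) : ℂ :=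
  Complex.exp (2 * (π : ℂ) * Complex.I * (((inner ℝ z.1 Ξ : ℝ) + z.2 * τ : ℝ) : ℂ))

section Waves

variable {n : ℕ} {H : Type*} [NormedAddCommGroup H] [InnerProductSpace ℂ H]

/-- `φ` is a red wave of frequency `2^m`, with Fourier density `f`: the spacetime Fourier
transform of `φ` is the `L²` measure `f dσ` on the piece `{(ξ,|ξ|) : ξ ∈ sector n m}` of the
forward light cone. -/
def IsRedWave (m : ℤ) (φ : Spc n → ℝ → H) (f : Spc n → H) : Prop :=
  MemLp f 2 (volume : Measure (Spc n)) ∧ (∀ ξ, ξ ∉ sector n m → f ξ = 0) ∧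
    ∀ x t, φ x t = ∫ ξ, redPhase ξ x t • f ξ

/-- `ψ` is a blue wave of frequency `2^m`, with Fourier density `g` on the backward light
cone piece `{(ξ,-|ξ|) : ξ ∈ sector n m}`. -/
def IsBlueWave (m : ℤ) (ψ : Spc n → ℝ → H) (g : Spc n → H) : Prop :=
  MemLp g 2 (volume : Measure (Spc n)) ∧ (∀ ξ, ξ ∉ sector n m → g ξ = 0) ∧
    ∀ x t, ψ x t = ∫ ξ, redPhase ξ x (-t) • g ξ

/-- The energy of a wave with Fourier density `f`; by Plancherel this equals
`‖φ(t)‖_{L²}²` for every time `t`. -/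
def waveEnergy (f : Spc n → H) : ℝ := ∫ ξ, ‖f ξ‖ ^ 2

/-- The margin of a red wave of frequency `2^m` with Fourier density `f`:
`2^{-m} dist(supp φ̂, 2^m(Σ⁺ \ Σ^{red}))`. -/
def marginRed (m : ℤ) (f : Spc n → H) : ℝ :=
  sInf {d | ∃ ξ ∈ Function.support f, ∃ η, η ∉ sector n m ∧
    d = (2 : ℝ) ^ (-m) * stDist (ξ, ‖ξ‖) (η, ‖η‖)}

/-- The margin of a blue wave of frequency `2^m` with Fourier density `g`. -/
def marginBlue (m : ℤ) (g : Spc n → H) : ℝ :=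
  sInf {d | ∃ ξ ∈ Function.support g, ∃ η, η ∉ sector n m ∧
    d = (2 : ℝ) ^ (-m) * stDist (ξ, -‖ξ‖) (η, -‖η‖)}

/-- The angular dispersion `diam {ξ/|ξ| : (ξ,τ) ∈ supp φ̂}` of a wave with density `f`. -/
def angularDispersion (f : Spc n → H) : ℝ :=
  Metric.diam ((fun ξ : Spc n => ‖ξ‖⁻¹ • ξ) '' Function.support f)

end Waves

/-- The `L^p` norm of the (tensor) product `φψ`, using `‖φ ⊗ ψ‖ = ‖φ‖ ‖ψ‖` pointwise. -/
def biLpNorm {n : ℕ} {H H' : Type*} [NormedAddCommGroup H] [NormedAddCommGroup H']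
    (φ : Spc n → ℝ → H) (ψ : Spc n → ℝ → H') (p : ℝ≥0∞) (μ : Measure (Spc n × ℝ)) : ℝ≥0∞ :=
  eLpNorm (fun z : Spc n × ℝ => ‖φ z.1 z.2‖ * ‖ψ z.1 z.2‖) p μ

section Geometry

variable {n : ℕ}

/-- The red cone `C^{red}(x₀,t₀)`. -/
def redCone (x₀ : Spc n) (t₀ : ℝ) : Set (Spc n × ℝ) :=
  {z | ∃ r : ℝ, ∃ ω ∈ underlineSigma n, ‖ω‖ = 1 ∧ z = (x₀ + r • ω, t₀ - r)}

/-- The blue cone `C^{blue}(x₀,t₀)`. -/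
def blueCone (x₀ : Spc n) (t₀ : ℝ) : Set (Spc n × ℝ) :=
  {z | ∃ r : ℝ, ∃ ω ∈ underlineSigma n, ‖ω‖ = 1 ∧ z = (x₀ + r • ω, t₀ + r)}

/-- The `r`-neighbourhood of a set in spacetime, w.r.t. the Euclidean metric on `ℝ^{n+1}`. -/
def nbhd (S : Set (Spc n × ℝ)) (r : ℝ) : Set (Spc n × ℝ) :=
  {z | ∃ w ∈ S, stDist z w ≤ r}

def redConeNbhd (x₀ : Spc n) (t₀ r : ℝ) : Set (Spc n × ℝ) := nbhd (redCone x₀ t₀) r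

def blueConeNbhd (x₀ : Spc n) (t₀ r : ℝ) : Set (Spc n × ℝ) := nbhd (blueCone x₀ t₀) r

def purpleConeNbhd (x₀ : Spc n) (t₀ r : ℝ) : Set (Spc n × ℝ) :=
  redConeNbhd x₀ t₀ r ∪ blueConeNbhd x₀ t₀ r

/-- The axis-parallel spacetime cube `Q(x₀,t₀;R)` with center `(x₀,t₀)` and side-length `R`. -/
def cube (x₀ : Spc n) (t₀ R : ℝ) : Set (Spc n × ℝ) :=
  {z | (∀ i, |z.1 i - x₀ i| ≤ R / 2) ∧ |z.2 - t₀| ≤ R / 2}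

/-- The cubical annulus `Q^{ann}(x₀,t₀;r₁,r₂)`. -/
def cubeAnn (x₀ : Spc n) (t₀ r₁ r₂ : ℝ) : Set (Spc n × ℝ) :=
  cube x₀ t₀ r₂ \ cube x₀ t₀ r₁

/-- Index set for the `2^{(n+1)j}` subcubes in `𝒬_j(Q)`. -/
abbrev QIdx (n j : ℕ) := (Fin n → Fin (2 ^ j)) × Fin (2 ^ j)

/-- The subcube of `Q(x₀,t₀;R)` in `𝒬_j(Q)` with index `v`. -/
def subCube (x₀ : Spc n) (t₀ R : ℝ) (j : ℕ) (v : QIdx n j) : Set (Spc n × ℝ) :=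
  {z | (∀ i, x₀ i - R / 2 + (v.1 i : ℝ) * (R / 2 ^ j) ≤ z.1 i ∧
          z.1 i ≤ x₀ i - R / 2 + ((v.1 i : ℝ) + 1) * (R / 2 ^ j)) ∧
    (t₀ - R / 2 + (v.2 : ℝ) * (R / 2 ^ j) ≤ z.2 ∧
      z.2 ≤ t₀ - R / 2 + ((v.2 : ℝ) + 1) * (R / 2 ^ j))}

/-- The `j`-quilt `[φ]_j = Σ_{q ∈ 𝒬_j(Q)} |φ^{(q)}| χ_q` of a wave table of depth `j` on
`Q(x₀,t₀;R)`. -/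
def quilt {n : ℕ} {H : Type*} [NormedAddCommGroup H] (x₀ : Spc n) (t₀ R : ℝ) (j : ℕ)
    (φ : QIdx n j → Spc n → ℝ → H) : Spc n × ℝ → ℝ :=
  fun z => ∑ v : QIdx n j, (subCube x₀ t₀ R j v).indicator (fun _ => ‖φ v z.1 z.2‖) z

/-- The shrunk subcube `(1-c')q` for `q ∈ 𝒬_j(Q)`. -/
def subCubeShrunk (x₀ : Spc n) (t₀ R : ℝ) (j : ℕ) (c' : ℝ) (v : QIdx n j) :
    Set (Spc n × ℝ) :=
  {z | (∀ i, |z.1 i - (x₀ i - R / 2 + ((v.1 i : ℝ) + 1 / 2) * (R / 2 ^ j))| ≤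
          (1 - c') * (R / 2 ^ j) / 2) ∧
    |z.2 - (t₀ - R / 2 + ((v.2 : ℝ) + 1 / 2) * (R / 2 ^ j))| ≤ (1 - c') * (R / 2 ^ j) / 2}

/-- The `(c',j)`-interior `I^{c',j}(Q) = ∪_{q ∈ 𝒬_j(Q)} (1-c')q`. -/
def interiorSet (x₀ : Spc n) (t₀ R : ℝ) (c' : ℝ) (j : ℕ) : Set (Spc n × ℝ) :=
  ⋃ v : QIdx n j, subCubeShrunk x₀ t₀ R j c' v

/-- The set `X(Q) = ∩_{j=C₀}^{k} I^{c 2^{-(k-j)/N}, j}(Q)`. -/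
def XSet (x₀ : Spc n) (t₀ R : ℝ) (C₀ k N : ℕ) (c : ℝ) : Set (Spc n × ℝ) :=
  ⋂ j ∈ Set.Icc C₀ k, interiorSet x₀ t₀ R (c * (2 : ℝ) ^ (-(((k - j : ℕ) : ℝ)) / N)) j

end Geometry

section DiskLocalization

variable {n : ℕ} {H : Type*} [NormedAddCommGroup H] [InnerProductSpace ℂ H]

/-- The evolution operator `U(t)`: `(U(t)f)^(ξ) = a(ξ) e^{2πit|ξ|} f̂(ξ)`. -/
def Uop (a : Spc n → ℝ) (t : ℝ) (f : Spc n → H) : Spc n → H :=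
  fun x => ∫ ξ, ((a ξ : ℂ) * redPhase ξ x t) • (𝓕 f ξ)

/-- The rescaled bump function `η_s(x) = s^{-n} η₀(x/s)`. -/
def etaScaled (η₀ : Spc n → ℝ) (s : ℝ) (x : Spc n) : ℝ := s ^ (-(n : ℝ)) * η₀ (s⁻¹ • x)

/-- The cutoff `χ_D * η_{ρ^{1-1/N}}` for the disk of radius `ρ` centered at `xD`. -/
def diskCutoff (η₀ : Spc n → ℝ) (N : ℕ) (xD : Spc n) (ρ : ℝ) (x : Spc n) : ℝ :=
  ∫ y, (Metric.closedBall xD ρ).indicator (fun _ => (1 : ℝ)) y *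
    etaScaled η₀ (ρ ^ (1 - 1 / (N : ℝ))) (x - y)

/-- The disk localization operator `P_D` for red waves of frequency `1`,
`D = D(x_D, t_D; ρ)`. -/
def PDred1 (η₀ a : Spc n → ℝ) (N : ℕ) (xD : Spc n) (tD ρ : ℝ)
    (φ : Spc n → ℝ → H) : Spc n → ℝ → H :=
  fun x t => Uop a (t - tD) (fun y => (diskCutoff η₀ N xD ρ y : ℂ) • φ y tD) x

/-- The disk localization operator `P_D` for red waves of frequency `2^j`, defined by
`P_D 𝐃_j φ := 𝐃_j P_D φ`. -/
def PDred (η₀ a : Spc n → ℝ) (N : ℕ) (j : ℤ) (xD : Spc n) (tD r : ℝ)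
    (φ : Spc n → ℝ → H) : Spc n → ℝ → H :=
  fun x t => PDred1 η₀ a N ((2 : ℝ) ^ j • xD) ((2 : ℝ) ^ j * tD) ((2 : ℝ) ^ j * r)
    (fun y s => φ ((2 : ℝ) ^ (-j) • y) ((2 : ℝ) ^ (-j) * s)) ((2 : ℝ) ^ j • x) ((2 : ℝ) ^ j * t)

/-- The disk localization operator `P_D` for blue waves of frequency `2^j`, defined by
`P_D 𝐓 φ := 𝐓 P_D φ`. -/
def PDblue (η₀ a : Spc n → ℝ) (N : ℕ) (j : ℤ) (xD : Spc n) (tD r : ℝ)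
    (ψ : Spc n → ℝ → H) : Spc n → ℝ → H :=
  fun x t => PDred η₀ a N j xD (-tD) r (fun y s => ψ y (-s)) x (-t)

end DiskLocalization

section NullForms

/-- Concrete finite dimensional complex Hilbert space. -/
abbrev CVec (d : ℕ) := EuclideanSpace ℂ (Fin d)

variable {n : ℕ}

/-- The symbol of `|□| = D₊ D₋`. -/
def boxSym (Ξ : Spc n) (τ : ℝ) : ℝ := (‖Ξ‖ + abs τ) * abs (‖Ξ‖ - abs τ)

/-- The symbol of `D₀^{β₀} D₊^{β₊} D₋^{β₋}`. -/
def fullSym (β₀ βp βm : ℝ) (Ξ : Spc n) (τ : ℝ) : ℝ :=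
  ‖Ξ‖ ^ β₀ * (‖Ξ‖ + abs τ) ^ βp * abs (‖Ξ‖ - abs τ) ^ βm

/-- `|□|^β (φψ)` where `φ, ψ` are red/blue waves with Fourier densities `f, g` (on the
forward resp. backward light cone), with values in the tensor product. -/
def nullFormRB (β : ℝ) {d₁ d₂ : ℕ} (f : Spc n → CVec d₁) (g : Spc n → CVec d₂) :
    Spc n × ℝ → EuclideanSpace ℂ (Fin d₁ × Fin d₂) :=
  fun z => (EuclideanSpace.equiv (Fin d₁ × Fin d₂) ℂ).symm fun p =>
    ∫ ξ, ∫ η, ((boxSym (ξ + η) (‖ξ‖ - ‖η‖) ^ β : ℝ) : ℂ) *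
      stPhase (ξ + η) (‖ξ‖ - ‖η‖) z * f ξ p.1 * g η p.2

/-- `|□|^β (φ ψ̄)` for the same waves. -/
def nullFormRBConj (β : ℝ) {d₁ d₂ : ℕ} (f : Spc n → CVec d₁) (g : Spc n → CVec d₂) :
    Spc n × ℝ → EuclideanSpace ℂ (Fin d₁ × Fin d₂) :=
  fun z => (EuclideanSpace.equiv (Fin d₁ × Fin d₂) ℂ).symm fun p =>
    ∫ ξ, ∫ η, ((boxSym (ξ - η) (‖ξ‖ + ‖η‖) ^ β : ℝ) : ℂ) *
      stPhase (ξ - η) (‖ξ‖ + ‖η‖) z * f ξ p.1 * (starRingEnd ℂ) (g η p.2)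

/-- One interaction term in `D₀^{β₀} D₊^{β₊} D₋^{β₋}(φψ)` for solutions of the free wave
equation, with signs `ε₁, ε₂ ∈ {±1}` for the two sheets of the light cone. -/
def interactTerm (β₀ βp βm ε₁ ε₂ : ℝ) {d₁ d₂ : ℕ}
    (f : Spc n → CVec d₁) (g : Spc n → CVec d₂)
    (z : Spc n × ℝ) (p : Fin d₁ × Fin d₂) : ℂ :=
  ∫ ξ, ∫ η, ((fullSym β₀ βp βm (ξ + η) (ε₁ * ‖ξ‖ + ε₂ * ‖η‖) : ℝ) : ℂ) *
    stPhase (ξ + η) (ε₁ * ‖ξ‖ + ε₂ * ‖η‖) z * f ξ p.1 * g η p.2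

/-- `D₀^{β₀} D₊^{β₊} D₋^{β₋}(φψ)` where `φ, ψ` are the solutions of the free wave equation
with Fourier densities `fp, fm` resp. `gp, gm` on the two sheets of the light cone. -/
def nullFormSol (β₀ βp βm : ℝ) {d₁ d₂ : ℕ} (fp fm : Spc n → CVec d₁)
    (gp gm : Spc n → CVec d₂) : Spc n × ℝ → EuclideanSpace ℂ (Fin d₁ × Fin d₂) :=
  fun z => (EuclideanSpace.equiv (Fin d₁ × Fin d₂) ℂ).symm fun p =>
    interactTerm β₀ βp βm 1 1 fp gp z p + interactTerm β₀ βp βm 1 (-1) fp gm z p +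
      interactTerm β₀ βp βm (-1) 1 fm gp z p + interactTerm β₀ βp βm (-1) (-1) fm gm z p

/-- The squared data norm `‖φ[0]‖²_{Ḣ^α}` of the solution of the free wave equation with
Fourier densities `fp, fm`. -/
def dataNormSq (α : ℝ) {d : ℕ} (fp fm : Spc n → CVec d) : ℝ :=
  ∫ ξ, ‖ξ‖ ^ (2 * α) * ‖fp ξ + fm ξ‖ ^ 2 + (2 * π) ^ 2 * ‖ξ‖ ^ (2 * α) * ‖fp ξ - fm ξ‖ ^ 2

/-- A solution of the free Schrödinger equation with Fourier density `f` on the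
paraboloid `{(ξ, |ξ|²/2)}`. -/
def schroWave {m : ℕ} (f : Spc m → ℂ) : Spc m × ℝ → ℂ :=
  fun z => ∫ ξ, Complex.exp
    (2 * (π : ℂ) * Complex.I * (((inner ℝ z.1 ξ : ℝ) + z.2 * (‖ξ‖ ^ 2 / 2) : ℝ) : ℂ)) * f ξ

end NullForms

section BilinearConstant

variable (n : ℕ)

/-- `A` is an admissible constant for the localized bilinear estimate at scale `R`. -/
def AdmissibleA (N k : ℕ) (R A : ℝ) : Prop :=
  ∀ (H H' : Type) (_ : NormedAddCommGroup H) (_ : InnerProductSpace ℂ H)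
    (_ : FiniteDimensional ℂ H) (_ : NormedAddCommGroup H') (_ : InnerProductSpace ℂ H')
    (_ : FiniteDimensional ℂ H')
    (φ : Spc n → ℝ → H) (f : Spc n → H) (ψ : Spc n → ℝ → H') (g : Spc n → H'),
    IsRedWave 0 φ f → IsBlueWave (k : ℤ) ψ g →
    1 / 100 - ((2 : ℝ) ^ k / R) ^ ((N : ℝ)⁻¹) ≤ marginRed 0 f →
    1 / 100 - ((2 : ℝ) ^ k / R) ^ ((N : ℝ)⁻¹) ≤ marginBlue (k : ℤ) g →
    ∀ (y : Spc n) (s : ℝ),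
      biLpNorm φ ψ (ENNReal.ofReal (((n : ℝ) + 3) / ((n : ℝ) + 1)))
          (volume.restrict (cube y s R)) ≤
        ENNReal.ofReal (A * Real.sqrt (waveEnergy f) * Real.sqrt (waveEnergy g))

/-- The best constant `A(R)` in the localized bilinear estimate. -/
def AConst (N k : ℕ) (R : ℝ) : ℝ :=
  sInf {A : ℝ | 0 ≤ A ∧ AdmissibleA n N k R A}

/-- The monotone envelope `Ā(R) = sup_{C₀ 2^k ≤ r ≤ R} A(r)`. -/
def AbarConst (N C₀ k : ℕ) (R : ℝ) : ℝ :=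
  sSup {a : ℝ | ∃ r : ℝ, (C₀ : ℝ) * 2 ^ k ≤ r ∧ r ≤ R ∧ a = AConst n N k r}

end BilinearConstant

/-- Convolution of two measures on spacetime `ℝ^{n+1}`. -/
def measConv {n : ℕ} (μ ν : Measure (Spc n × ℝ)) : Measure (Spc n × ℝ) :=
  Measure.map (fun q : (Spc n × ℝ) × (Spc n × ℝ) => q.1 + q.2) (μ.prod ν)


section Aux

/-- The transversality constant `c₀ = cos(π/8) - (1/2 + π/8) > 0`. -/
def c0 : ℝ := Real.cos (π/8) - (1/2 + π/8)

lemma slice_bound {S B : Set ℝ} {h : ℝ → ℝ} {c : ℝ} (hc : 0 < c)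
    (hexp : ∀ t ∈ S, ∀ s ∈ S, t ≤ s → c * (s - t) ≤ h s - h t)
    (hSB : ∀ t ∈ S, h t ∈ B) :
    volume S ≤ ENNReal.ofReal c⁻¹ * volume B := by
  classical
  set g : ℝ → ℝ := Function.invFunOn h S with hg
  have key : ∀ a ∈ h '' S, g a ∈ S ∧ h (g a) = a := fun a ha =>
    ⟨Function.invFunOn_mem ha, Function.invFunOn_eq ha⟩
  have habs : ∀ t ∈ S, ∀ s ∈ S, c * |s - t| ≤ |h s - h t| := by
    intro t ht s hs
    rcases le_total t s with hle | hle
    · have := hexp t ht s hs hle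
      rw [abs_of_nonneg (by linarith), abs_of_nonneg (by nlinarith)]; exact this
    · have := hexp s hs t ht hle
      rw [abs_sub_comm, abs_sub_comm (h s), abs_of_nonneg (by linarith),
        abs_of_nonneg (by nlinarith)]; exact this
  have hlip : LipschitzOnWith (Real.toNNReal c⁻¹) g (h '' S) := by
    rw [lipschitzOnWith_iff_dist_le_mul]
    intro a ha b hb
    obtain ⟨hgaS, hga⟩ := key a ha
    obtain ⟨hgbS, hgb⟩ := key b hb
    rw [Real.coe_toNNReal _ (by positivity), Real.dist_eq, Real.dist_eq,
      inv_mul_eq_div, le_div_iff₀ hc, mul_comm]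
    have := habs _ hgbS _ hgaS
    rw [hga, hgb] at this
    exact this
  have hsub : S ⊆ g '' (h '' S) := by
    intro t ht
    refine ⟨h t, Set.mem_image_of_mem _ ht, ?_⟩
    obtain ⟨hgS, hgh⟩ := key (h t) (Set.mem_image_of_mem _ ht)
    have := habs _ hgS _ ht
    rw [hgh, sub_self, abs_zero] at this
    have h0 : |t - g (h t)| = 0 := by nlinarith [abs_nonneg (t - g (h t))]
    have := abs_eq_zero.mp h0
    linarith [sub_eq_zero.mp this]
  calc volume S = μH[1] S := by rw [MeasureTheory.hausdorffMeasure_real]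
    _ ≤ μH[1] (g '' (h '' S)) := measure_mono hsub
    _ ≤ (Real.toNNReal c⁻¹ : ℝ≥0∞) ^ (1:ℝ) * μH[1] (h '' S) :=
        hlip.hausdorffMeasure_image_le zero_le_one
    _ ≤ ENNReal.ofReal c⁻¹ * μH[1] B := by
        rw [ENNReal.rpow_one]
        exact mul_le_mul_right (measure_mono (Set.image_subset_iff.2 fun t ht => hSB t ht)) _
    _ = ENNReal.ofReal c⁻¹ * volume B := by rw [MeasureTheory.hausdorffMeasure_real]

lemma normalized_dist_le_angle {n : ℕ} {x y : Spc n} (hx : x ≠ 0) (hy : y ≠ 0) :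
    ‖‖x‖⁻¹ • x - ‖y‖⁻¹ • y‖ ≤ angle x y := by
  set a := ‖x‖⁻¹ • x
  set b := ‖y‖⁻¹ • y
  have ha : ‖a‖ = 1 := norm_smul_inv_norm hx
  have hb : ‖b‖ = 1 := norm_smul_inv_norm hy
  have hangle : angle a b = angle x y := by
    rw [angle_smul_left_of_pos _ _ (inv_pos.2 (norm_pos_iff.2 hx)),
      angle_smul_right_of_pos _ _ (inv_pos.2 (norm_pos_iff.2 hy))]
  have hcos : Real.cos (angle a b) = inner ℝ a b := by
    rw [cos_angle, ha, hb]; simp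
  have hsq : ‖a - b‖ ^ 2 = 2 - 2 * Real.cos (angle a b) := by
    rw [norm_sub_sq_real, ha, hb, hcos]; ring
  have hθ : 0 ≤ angle x y := angle_nonneg x y
  have hub : 1 - (angle a b) ^ 2 / 2 ≤ Real.cos (angle a b) := Real.one_sub_sq_div_two_le_cos
  nlinarith [norm_nonneg (a - b), hsq, hangle]

lemma cs_expand {n : ℕ} (x w : Spc n) (c : ℝ) (hx : x ≠ 0) :
    ‖x‖ + c * (inner ℝ w x / ‖x‖) ≤ ‖x + c • w‖ := by
  have hn : (0:ℝ) < ‖x‖ := norm_pos_iff.2 hx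
  have hcs : inner ℝ (x + c • w) x ≤ ‖x + c • w‖ * ‖x‖ := real_inner_le_norm _ _
  rw [inner_add_left, real_inner_smul_left, real_inner_self_eq_norm_sq] at hcs
  
  calc ‖x‖ + c * (inner ℝ w x / ‖x‖) = (‖x‖^2 + c * inner ℝ w x) / ‖x‖ := by field_simp
    _ ≤ ‖x + c • w‖ := by rw [div_le_iff₀ hn]; linarith

lemma c0_pos : 0 < c0 := by
  rw [c0]
  have h1 : 1 - (π/8)^2/2 ≤ Real.cos (π/8) := Real.one_sub_sq_div_two_le_cos
  have h2 : π < 3.15 := Real.pi_lt_d2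
  have h3 : 0 < π := Real.pi_pos
  nlinarith

lemma key_expand {n : ℕ} (u ω₀ e' : Spc n) (hω : ‖ω₀‖ = 1) (he' : ‖e'‖ = 1)
    {r : ℝ} (hr : 2 ≤ r)
    (ξ ξ' : Spc n) (c : ℝ) (hc : 0 ≤ c) (hdiff : ξ' = ξ + c • ω₀)
    (hξn : 1 ≤ ‖ξ‖) (hξω : angle ξ ω₀ ≤ 1/r)
    (hξ'e : angle ξ' e' ≤ π/8) (hξ'ω : angle ξ' ω₀ ≤ 1/r) (hξ'n : 1 ≤ ‖ξ'‖)
    (hηn : 1 ≤ ‖u - ξ'‖) (hηe : angle (u - ξ') e' ≤ π/8) :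
    c0 * c ≤ (‖ξ'‖ - ‖u - ξ'‖) - (‖ξ‖ - ‖u - ξ‖) := by
  rw [c0]
  have hrpos : (0:ℝ) < r := lt_of_lt_of_le two_pos hr
  have hhalf : 1/r ≤ 1/2 := by
    rw [div_le_div_iff₀ hrpos two_pos]; linarith
  have hπ : π < 3.15 := Real.pi_lt_d2
  have hπ0 : 0 < π := Real.pi_pos
  have hξ0 : ξ ≠ 0 := fun h => by rw [h, norm_zero] at hξn; linarith
  have hξ'0 : ξ' ≠ 0 := fun h => by rw [h, norm_zero] at hξ'n; linarith
  have hη'0 : u - ξ' ≠ 0 := fun h => by rw [h, norm_zero] at hηn; linarith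
  have hξpos : (0:ℝ) < ‖ξ‖ := norm_pos_iff.2 hξ0
  have hη'pos : (0:ℝ) < ‖u - ξ'‖ := norm_pos_iff.2 hη'0
  -- term 1
  have hterm1 : ‖ξ‖ + c * ((inner ℝ ω₀ ξ : ℝ) / ‖ξ‖) ≤ ‖ξ'‖ := by
    rw [hdiff]; exact cs_expand ξ ω₀ c hξ0
  have hcos1 : (inner ℝ ω₀ ξ : ℝ) / ‖ξ‖ = Real.cos (angle ξ ω₀) := by
    rw [cos_angle, hω, real_inner_comm]; ring
  have hcos1nn : 0 ≤ Real.cos (angle ξ ω₀) := by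
    apply Real.cos_nonneg_of_mem_Icc
    constructor
    · linarith [angle_nonneg ξ ω₀, hπ0]
    · have := Real.pi_gt_three
      calc angle ξ ω₀ ≤ 1/r := hξω
        _ ≤ π/2 := by linarith
  -- term 2
  have hηdiff : u - ξ = (u - ξ') + c • ω₀ := by rw [hdiff]; abel
  have hterm2 : ‖u - ξ'‖ + c * ((inner ℝ ω₀ (u - ξ') : ℝ) / ‖u - ξ'‖) ≤ ‖u - ξ‖ := by
    rw [hηdiff]; exact cs_expand (u - ξ') ω₀ c hη'0
  -- lower bound for the cosine in term 2
  have hsplit : (inner ℝ ω₀ (u - ξ') : ℝ) = (inner ℝ e' (u - ξ') : ℝ)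
      + (inner ℝ (ω₀ - e') (u - ξ') : ℝ) := by
    rw [inner_sub_left]; ring
  have he'η : Real.cos (π/8) * ‖u - ξ'‖ ≤ (inner ℝ e' (u - ξ') : ℝ) := by
    have : Real.cos (angle (u - ξ') e') = (inner ℝ (u - ξ') e' : ℝ) / (‖u - ξ'‖ * 1) := by
      rw [cos_angle, he']
    have hmono : Real.cos (π/8) ≤ Real.cos (angle (u - ξ') e') := by
      apply Real.cos_le_cos_of_nonneg_of_le_pi (angle_nonneg _ _) (by linarith) hηe
    rw [this, real_inner_comm] at hmono
    calc Real.cos (π/8) * ‖u - ξ'‖ ≤ ((inner ℝ e' (u - ξ') : ℝ) / (‖u - ξ'‖ * 1)) * ‖u - ξ'‖ := by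
          apply mul_le_mul_of_nonneg_right hmono hη'pos.le
      _ = (inner ℝ e' (u - ξ') : ℝ) := by field_simp
  have hω₀e' : ‖ω₀ - e'‖ ≤ 1/2 + π/8 := by
    have h1 : ‖‖ξ'‖⁻¹ • ξ' - ‖ω₀‖⁻¹ • ω₀‖ ≤ angle ξ' ω₀ := normalized_dist_le_angle hξ'0 (by
      intro h; rw [h, norm_zero] at hω; linarith)
    have h2 : ‖‖ξ'‖⁻¹ • ξ' - ‖e'‖⁻¹ • e'‖ ≤ angle ξ' e' := normalized_dist_le_angle hξ'0 (by
      intro h; rw [h, norm_zero] at he'; linarith)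
    rw [hω, inv_one, one_smul] at h1
    rw [he', inv_one, one_smul] at h2
    calc ‖ω₀ - e'‖ ≤ ‖ω₀ - ‖ξ'‖⁻¹ • ξ'‖ + ‖‖ξ'‖⁻¹ • ξ' - e'‖ := norm_sub_le_norm_sub_add_norm_sub _ _ _
      _ ≤ angle ξ' ω₀ + angle ξ' e' := by
          rw [norm_sub_rev]
          exact add_le_add h1 h2
      _ ≤ 1/2 + π/8 := add_le_add (le_trans hξ'ω hhalf) hξ'e
  have habs : -( (1/2 + π/8) * ‖u - ξ'‖) ≤ (inner ℝ (ω₀ - e') (u - ξ') : ℝ) := by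
    have := abs_real_inner_le_norm (ω₀ - e') (u - ξ')
    have h2 : ‖ω₀ - e'‖ * ‖u - ξ'‖ ≤ (1/2 + π/8) * ‖u - ξ'‖ :=
      mul_le_mul_of_nonneg_right hω₀e' hη'pos.le
    have := neg_abs_le (inner ℝ (ω₀ - e') (u - ξ') : ℝ)
    nlinarith [abs_real_inner_le_norm (ω₀ - e') (u - ξ'), neg_abs_le (inner ℝ (ω₀ - e') (u - ξ') : ℝ)]
  have hI : Real.cos (π/8) - (1/2 + π/8) ≤ (inner ℝ ω₀ (u - ξ') : ℝ) / ‖u - ξ'‖ := by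
    rw [le_div_iff₀ hη'pos, hsplit]
    nlinarith
  have h2' : c * (Real.cos (π/8) - (1/2 + π/8)) ≤ c * ((inner ℝ ω₀ (u - ξ') : ℝ) / ‖u - ξ'‖) :=
    mul_le_mul_of_nonneg_left hI hc
  have h1' : 0 ≤ c * ((inner ℝ ω₀ ξ : ℝ) / ‖ξ‖) := by
    rw [hcos1]; positivity
  linarith

lemma measurable_angle_right {n : ℕ} (v : Spc n) : Measurable fun ξ : Spc n => angle ξ v := by
  unfold InnerProductGeometry.angle
  exact Real.continuous_arccos.measurable.comp
    (((continuous_id.inner (continuous_const : Continuous fun _ : Spc n => v)).measurable).div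
      ((measurable_norm.mul measurable_const)))

lemma coord_abs_le_norm {n : ℕ} (x : Spc n) (i : Fin n) : |x i| ≤ ‖x‖ := by
  rw [EuclideanSpace.norm_eq]
  refine le_trans ?_ (Real.sqrt_le_sqrt (Finset.single_le_sum
    (f := fun j => ‖x j‖^2) (fun _ _ => sq_nonneg _) (Finset.mem_univ i)))
  rw [Real.sqrt_sq_eq_abs, abs_norm, Real.norm_eq_abs]

-- box bound
lemma box_bound {m : ℕ} (ξ : Spc (m+1)) {r : ℝ} (hr : 2 ≤ r)
    (hξn : 1 ≤ ‖ξ‖) (hξ2 : ‖ξ‖ ≤ 2)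
    (hang : angle ξ (EuclideanSpace.single (0:Fin (m+1)) (1:ℝ)) ≤ 1/r) (i : Fin m) :
    |ξ i.succ| ≤ 2/r := by
  set ω : Spc (m+1) := EuclideanSpace.single (0:Fin (m+1)) (1:ℝ) with hωdef
  have hωn : ‖ω‖ = 1 := by simp [hωdef, EuclideanSpace.norm_single]
  have hrpos : (0:ℝ) < r := lt_of_lt_of_le two_pos hr
  have hξ0 : ξ ≠ 0 := fun h => by rw [h, norm_zero] at hξn; linarith
  have hξpos : (0:ℝ) < ‖ξ‖ := by linarith
  set θ := angle ξ ω with hθdef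
  have hθ0 : 0 ≤ θ := angle_nonneg _ _
  have hθπ : θ ≤ π := angle_le_pi _ _
  have hcos : (inner ℝ ξ ω : ℝ) = ‖ξ‖ * Real.cos θ := by
    rw [hθdef, cos_angle, hωn]; field_simp
  set P : Spc (m+1) := ξ - (inner ℝ ξ ω : ℝ) • ω with hPdef
  have hPn : ‖P‖^2 = (‖ξ‖ * Real.sin θ)^2 := by
    have : ‖P‖^2 = ‖ξ‖^2 - 2 * (inner ℝ ξ ω : ℝ) * (inner ℝ ξ ω : ℝ)
        + ((inner ℝ ξ ω : ℝ))^2 * ‖ω‖^2 := by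
      rw [hPdef, norm_sub_sq_real, real_inner_smul_right, norm_smul]
      simp [mul_pow]; ring
    rw [this, hωn, hcos, mul_pow, mul_pow]
    have := Real.sin_sq_add_cos_sq θ
    nlinarith
  have hsin0 : 0 ≤ Real.sin θ := Real.sin_nonneg_of_nonneg_of_le_pi hθ0 hθπ
  have hsinle : Real.sin θ ≤ θ := Real.sin_le hθ0
  have hPle : ‖P‖ ≤ 2/r := by
    have h1 : ‖ξ‖ * Real.sin θ ≤ 2 * (1/r) := by
      apply mul_le_mul hξ2 (le_trans hsinle hang) hsin0 (by norm_num)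
    have h2 : 0 ≤ ‖ξ‖ * Real.sin θ := by positivity
    have h3 : ‖P‖^2 ≤ (2/r)^2 := by
      rw [hPn]
      have h4 : (2:ℝ) * (1/r) = 2/r := by ring
      rw [h4] at h1
      nlinarith [mul_le_mul h1 h1 h2 (by positivity : (0:ℝ) ≤ 2/r)]
    have := Real.sqrt_le_sqrt h3
    rwa [Real.sqrt_sq (norm_nonneg P), Real.sqrt_sq (by positivity : (0:ℝ) ≤ 2/r)] at this
  have hcoord : P i.succ = ξ i.succ := by
    simp [hPdef, hωdef, EuclideanSpace.single_apply, Fin.succ_ne_zero]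
  calc |ξ i.succ| = |P i.succ| := by rw [hcoord]
    _ ≤ ‖P‖ := coord_abs_le_norm P i.succ
    _ ≤ 2/r := hPle

lemma rotated_bound (m : ℕ) (u e' : Spc (m+1)) (he' : ‖e'‖ = 1) {r : ℝ} (hr : 2 ≤ r)
    {B : Set ℝ} (hB : MeasurableSet B) :
    volume {ξ : Spc (m+1) | angle ξ e' ≤ π/8 ∧ 1 ≤ ‖ξ‖ ∧ ‖ξ‖ ≤ 2 ∧
        angle ξ (EuclideanSpace.single (0:Fin (m+1)) (1:ℝ)) ≤ 1/r ∧
        angle (u - ξ) e' ≤ π/8 ∧ 1 ≤ ‖u - ξ‖ ∧ (‖ξ‖ - ‖u - ξ‖) ∈ B} ≤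
      ENNReal.ofReal ((4/r)^m) * (ENNReal.ofReal c0⁻¹ * volume B) := by
  have hrpos : (0:ℝ) < r := lt_of_lt_of_le two_pos hr
  set ω : Spc (m+1) := EuclideanSpace.single (0:Fin (m+1)) (1:ℝ) with hωdef
  have hωn : ‖ω‖ = 1 := by simp [hωdef, EuclideanSpace.norm_single]
  set T : Set (Spc (m+1)) := {ξ | angle ξ e' ≤ π/8 ∧ 1 ≤ ‖ξ‖ ∧ ‖ξ‖ ≤ 2 ∧
      angle ξ ω ≤ 1/r ∧ angle (u - ξ) e' ≤ π/8 ∧ 1 ≤ ‖u - ξ‖ ∧ (‖ξ‖ - ‖u - ξ‖) ∈ B} with hTdef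
  have hT : MeasurableSet T := by
    rw [hTdef]
    simp only [Set.setOf_and]
    refine MeasurableSet.inter (measurableSet_le (measurable_angle_right e') measurable_const)
      (MeasurableSet.inter (measurableSet_le measurable_const measurable_norm)
      (MeasurableSet.inter (measurableSet_le measurable_norm measurable_const)
      (MeasurableSet.inter (measurableSet_le (measurable_angle_right ω) measurable_const)
      (MeasurableSet.inter (measurableSet_le
          ((measurable_angle_right e').comp (measurable_const.sub measurable_id)) measurable_const)
      (MeasurableSet.inter (measurableSet_le measurable_const
          (measurable_norm.comp (measurable_const.sub measurable_id)))
      ((measurable_norm.sub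
          (measurable_norm.comp (measurable_const.sub measurable_id))) hB))))))
  set Ψ : Spc (m+1) ≃ᵐ ℝ × (Fin m → ℝ) :=
    (MeasurableEquiv.toLp 2 (Fin (m+1) → ℝ)).symm.trans
      (MeasurableEquiv.piFinSuccAbove (fun _ => ℝ) 0) with hΨdef
  have hΨmp : MeasurePreserving Ψ volume volume :=
    (volume_preserving_piFinSuccAbove (fun _ : Fin (m+1) => ℝ) 0).comp
      (EuclideanSpace.volume_preserving_symm_measurableEquiv_toLp (Fin (m+1)))
  have hvol : volume T = (volume : Measure (ℝ × (Fin m → ℝ))) (Ψ.symm ⁻¹' T) :=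
    ((hΨmp.symm Ψ).measure_preimage hT.nullMeasurableSet).symm
  have hΨs : ∀ p : ℝ × (Fin m → ℝ), Ψ.symm p = (MeasurableEquiv.toLp 2 (Fin (m+1) → ℝ)).symm.symm
      ((MeasurableEquiv.piFinSuccAbove (fun _ : Fin (m+1) => ℝ) 0).symm p) := fun p => rfl
  -- coordinates
  have hxi0 : ∀ (t : ℝ) (y : Fin m → ℝ), (Ψ.symm (t, y) : Spc (m+1)) 0 = t := by
    intro t y
    rw [hΨs]
    simp [MeasurableEquiv.piFinSuccAbove, MeasurableEquiv.coe_toLp]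
  have hxisucc : ∀ (t : ℝ) (y : Fin m → ℝ) (i : Fin m), (Ψ.symm (t, y) : Spc (m+1)) i.succ = y i := by
    intro t y i
    rw [hΨs]
    simp [MeasurableEquiv.piFinSuccAbove, MeasurableEquiv.coe_toLp]
  have hxidiff : ∀ (t s : ℝ) (y : Fin m → ℝ),
      (Ψ.symm (s, y) : Spc (m+1)) = Ψ.symm (t, y) + (s - t) • ω := by
    intro t s y
    rw [hΨs, hΨs]
    refine PiLp.ext fun j => ?_
    induction j using Fin.cases with
    | zero => simp [hωdef, MeasurableEquiv.piFinSuccAbove,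
        MeasurableEquiv.coe_toLp, EuclideanSpace.single_apply]
    | succ i => simp [hωdef, MeasurableEquiv.piFinSuccAbove,
        MeasurableEquiv.coe_toLp, EuclideanSpace.single_apply, Fin.succ_ne_zero]
  -- the box
  set box : Set (Fin m → ℝ) := Set.univ.pi fun _ => Set.Icc (-(2/r)) (2/r) with hboxdef
  have hboxmeas : MeasurableSet box := MeasurableSet.univ_pi fun _ => measurableSet_Icc
  have hslice : ∀ y : Fin m → ℝ,
      volume {t : ℝ | Ψ.symm (t, y) ∈ T} ≤
        box.indicator (fun _ => ENNReal.ofReal c0⁻¹ * volume B) y := by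
    intro y
    by_cases hy : y ∈ box
    · rw [Set.indicator_of_mem hy]
      refine slice_bound (h := fun t => ‖(Ψ.symm (t,y) : Spc (m+1))‖ - ‖u - Ψ.symm (t,y)‖) c0_pos ?_ ?_
      · intro t ht s hs hts
        have hm_t := ht; have hm_s := hs
        simp only [Set.mem_setOf_eq, hTdef] at hm_t hm_s
        exact key_expand u ω e' hωn he' hr _ _ (s - t) (by linarith)
          (hxidiff t s y) hm_t.2.1 hm_t.2.2.2.1 hm_s.1 hm_s.2.2.2.1 hm_s.2.1
          hm_s.2.2.2.2.2.1 hm_s.2.2.2.2.1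
      · intro t ht
        simp only [Set.mem_setOf_eq, hTdef] at ht
        exact ht.2.2.2.2.2.2
    · rw [Set.indicator_of_notMem hy]
      have hempty : {t : ℝ | Ψ.symm (t, y) ∈ T} = ∅ := by
        rw [Set.eq_empty_iff_forall_notMem]
        intro t ht
        simp only [Set.mem_setOf_eq, hTdef] at ht
        apply hy
        rw [hboxdef]
        intro i _
        have := box_bound (Ψ.symm (t, y)) hr ht.2.1 ht.2.2.1 ht.2.2.2.1 i
        rw [hxisucc t y i] at this
        exact ⟨neg_le_of_abs_le this, le_of_abs_le this⟩
      rw [hempty]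
      simp
  calc volume T = (volume : Measure (ℝ × (Fin m → ℝ))) (Ψ.symm ⁻¹' T) := hvol
    _ = ∫⁻ y, volume {t : ℝ | Ψ.symm (t, y) ∈ T} ∂(volume : Measure (Fin m → ℝ)) := by
        rw [Measure.volume_eq_prod, Measure.prod_apply_symm (Ψ.symm.measurable hT)]
        rfl
    _ ≤ ∫⁻ y, box.indicator (fun _ => ENNReal.ofReal c0⁻¹ * volume B) y
          ∂(volume : Measure (Fin m → ℝ)) := lintegral_mono hslice
    _ = (ENNReal.ofReal c0⁻¹ * volume B) * volume box := by
        rw [lintegral_indicator_const hboxmeas]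
    _ ≤ ENNReal.ofReal ((4/r)^m) * (ENNReal.ofReal c0⁻¹ * volume B) := by
        rw [mul_comm]
        apply mul_le_mul_left
        rw [hboxdef, volume_pi_pi]
        simp only [Real.volume_Icc]
        rw [Finset.prod_const]
        have : (2:ℝ)/r - (-(2/r)) = 4/r := by ring
        rw [this, ← ENNReal.ofReal_pow (by positivity)]
        simp

lemma Tu_bound (m : ℕ) (u ω₀ eo : Spc (m+1)) (hω : ‖ω₀‖ = 1) (heo : ‖eo‖ = 1)
    {r : ℝ} (hr : 2 ≤ r) {B : Set ℝ} (hB : MeasurableSet B) :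
    volume {ξ : Spc (m+1) | angle ξ eo ≤ π/8 ∧ 1 ≤ ‖ξ‖ ∧ ‖ξ‖ ≤ 2 ∧ angle ξ ω₀ ≤ 1/r ∧
        angle (u - ξ) eo ≤ π/8 ∧ 1 ≤ ‖u - ξ‖ ∧ (‖ξ‖ - ‖u - ξ‖) ∈ B} ≤
      ENNReal.ofReal ((4/r)^m) * (ENNReal.ofReal c0⁻¹ * volume B) := by
  set ε : Spc (m+1) := EuclideanSpace.single (0:Fin (m+1)) (1:ℝ) with hεdef
  have hεn : ‖ε‖ = 1 := by simp [hεdef, EuclideanSpace.norm_single]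
  set R : Spc (m+1) ≃ₗᵢ[ℝ] Spc (m+1) := Submodule.reflection (ℝ ∙ (ω₀ - ε))ᗮ with hRdef
  have hRω : R ω₀ = ε := Submodule.reflection_sub (by rw [hω, hεn])
  have hωR : ω₀ = R.symm ε := by rw [← hRω]; simp
  set T : Set (Spc (m+1)) := {ξ | angle ξ eo ≤ π/8 ∧ 1 ≤ ‖ξ‖ ∧ ‖ξ‖ ≤ 2 ∧ angle ξ ω₀ ≤ 1/r ∧
      angle (u - ξ) eo ≤ π/8 ∧ 1 ≤ ‖u - ξ‖ ∧ (‖ξ‖ - ‖u - ξ‖) ∈ B} with hTdef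
  have hT : MeasurableSet T := by
    rw [hTdef]
    simp only [Set.setOf_and]
    refine MeasurableSet.inter (measurableSet_le (measurable_angle_right eo) measurable_const)
      (MeasurableSet.inter (measurableSet_le measurable_const measurable_norm)
      (MeasurableSet.inter (measurableSet_le measurable_norm measurable_const)
      (MeasurableSet.inter (measurableSet_le (measurable_angle_right ω₀) measurable_const)
      (MeasurableSet.inter (measurableSet_le
          ((measurable_angle_right eo).comp (measurable_const.sub measurable_id)) measurable_const)
      (MeasurableSet.inter (measurableSet_le measurable_const
          (measurable_norm.comp (measurable_const.sub measurable_id)))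
      ((measurable_norm.sub
          (measurable_norm.comp (measurable_const.sub measurable_id))) hB))))))
  have hmp : MeasurePreserving (R.symm : Spc (m+1) → Spc (m+1)) volume volume :=
    R.symm.measurePreserving
  have hvol : volume ((R.symm : Spc (m+1) → Spc (m+1)) ⁻¹' T) = volume T :=
    hmp.measure_preimage hT.nullMeasurableSet
  have hang : ∀ (x v : Spc (m+1)), angle (R.symm x) (R.symm v) = angle x v := fun x v =>
    R.symm.toLinearIsometry.angle_map x v
  have hsub : (R.symm : Spc (m+1) → Spc (m+1)) ⁻¹' T ⊆
      {ζ : Spc (m+1) | angle ζ (R eo) ≤ π/8 ∧ 1 ≤ ‖ζ‖ ∧ ‖ζ‖ ≤ 2 ∧ angle ζ ε ≤ 1/r ∧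
        angle (R u - ζ) (R eo) ≤ π/8 ∧ 1 ≤ ‖R u - ζ‖ ∧ (‖ζ‖ - ‖R u - ζ‖) ∈ B} := by
    intro ζ hζ
    simp only [Set.mem_preimage, hTdef, Set.mem_setOf_eq] at hζ
    obtain ⟨h1, h2, h3, h4, h5, h6, h7⟩ := hζ
    have heq : u - R.symm ζ = R.symm (R u - ζ) := by
      rw [map_sub]; simp
    have hnζ : ‖(R.symm : Spc (m+1) → Spc (m+1)) ζ‖ = ‖ζ‖ := R.symm.norm_map ζ
    have hnη : ‖u - R.symm ζ‖ = ‖R u - ζ‖ := by rw [heq, R.symm.norm_map]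
    refine ⟨?_, ?_, ?_, ?_, ?_, ?_, ?_⟩
    · rw [← hang ζ (R eo)]; simpa using h1
    · rwa [hnζ] at h2
    · rwa [hnζ] at h3
    · rw [← hang ζ ε, ← hωR]; exact h4
    · rw [← hang (R u - ζ) (R eo), ← heq]; simpa using h5
    · rwa [hnη] at h6
    · rwa [hnζ, hnη] at h7
  calc volume T = volume ((R.symm : Spc (m+1) → Spc (m+1)) ⁻¹' T) := hvol.symm
    _ ≤ volume {ζ : Spc (m+1) | angle ζ (R eo) ≤ π/8 ∧ 1 ≤ ‖ζ‖ ∧ ‖ζ‖ ≤ 2 ∧ angle ζ ε ≤ 1/r ∧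
        angle (R u - ζ) (R eo) ≤ π/8 ∧ 1 ≤ ‖R u - ζ‖ ∧ (‖ζ‖ - ‖R u - ζ‖) ∈ B} :=
        measure_mono hsub
    _ ≤ _ := rotated_bound m (R u) (R eo) (by rw [R.norm_map, heo]) hr hB


end Aux

/-- Transverse convolution of surface measures on the cone.  Let `n ≥ 2`.
There is a constant `C = C(n)` such that for every `k ≥ 0`, `r ≥ 2` and unit vector `ω₀`,
the convolution of the surface measure `σ₁` of the sector
`Γ = {ξ : ∠(ξ,e₁) ≤ π/8, 1 ≤ |ξ| ≤ 2, ∠(ξ,ω₀) ≤ 1/r}` of the forward cone with the surface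
measure `σ₂` of the truncated backward cone at frequencies `2^k ≤ |η| ≤ 2^{k+1}` is
absolutely continuous, with density bounded by `C r^{-(n-1)}`. -/
theorem transverse_surface_measure_convolution
    (n : ℕ) (hn : 2 ≤ n) :
    ∃ C : ℝ, 0 < C ∧
      ∀ (k : ℕ) (r : ℝ), 2 ≤ r → ∀ (ω₀ : Spc n), ‖ω₀‖ = 1 →
      ∀ (Γ : Set (Spc n)),
        Γ = {ξ : Spc n | angle ξ (e1 n) ≤ π / 8 ∧ 1 ≤ ‖ξ‖ ∧ ‖ξ‖ ≤ 2 ∧ angle ξ ω₀ ≤ 1 / r} →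
      ∀ (σ₁ σ₂ : Measure (Spc n × ℝ)),
        σ₁ = Measure.map (fun ξ : Spc n => ((ξ, ‖ξ‖) : Spc n × ℝ)) (volume.restrict Γ) →
        σ₂ = Measure.map (fun η : Spc n => ((η, -‖η‖) : Spc n × ℝ))
              (volume.restrict (sector n (k : ℤ))) →
        measConv σ₁ σ₂ ≪ (volume : Measure (Spc n × ℝ)) ∧
        ∀ A : Set (Spc n × ℝ), MeasurableSet A →
          measConv σ₁ σ₂ A ≤ ENNReal.ofReal (C * r ^ (-((n : ℝ) - 1))) * volume A := by
  obtain ⟨m, rfl⟩ : ∃ m, n = m + 1 := ⟨n - 1, by omega⟩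
  refine ⟨(4:ℝ)^m * c0⁻¹, by have := c0_pos; positivity, ?_⟩
  intro k r hr ω₀ hω Γ hΓ σ₁ σ₂ hσ₁ hσ₂
  have hrpos : (0:ℝ) < r := lt_of_lt_of_le two_pos hr
  have he1 : ‖e1 (m+1)‖ = 1 := by
    rw [e1, dif_pos (Nat.succ_pos m)]
    simp [EuclideanSpace.norm_single]
  -- measurability of the pieces
  have hΓmeas : MeasurableSet Γ := by
    rw [hΓ]
    simp only [Set.setOf_and]
    exact MeasurableSet.inter (measurableSet_le (measurable_angle_right _) measurable_const)
      (MeasurableSet.inter (measurableSet_le measurable_const measurable_norm)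
      (MeasurableSet.inter (measurableSet_le measurable_norm measurable_const)
      (measurableSet_le (measurable_angle_right _) measurable_const)))
  have hSmeas : MeasurableSet (sector (m+1) (k:ℤ)) := by
    rw [sector]
    simp only [Set.setOf_and]
    exact MeasurableSet.inter (measurableSet_le (measurable_angle_right _) measurable_const)
      (MeasurableSet.inter (measurableSet_le measurable_const measurable_norm)
      (measurableSet_le measurable_norm measurable_const))
  have hF₁ : Measurable fun ξ : Spc (m+1) => ((ξ, ‖ξ‖) : Spc (m+1) × ℝ) :=
    measurable_id.prodMk measurable_norm
  have hF₂ : Measurable fun η : Spc (m+1) => ((η, -‖η‖) : Spc (m+1) × ℝ) :=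
    measurable_id.prodMk measurable_norm.neg
  set G : Spc (m+1) × Spc (m+1) → Spc (m+1) × ℝ :=
    fun p => (p.1 + p.2, ‖p.1‖ - ‖p.2‖) with hGdef
  have hG : Measurable G :=
    (measurable_fst.add measurable_snd).prodMk
      ((measurable_norm.comp measurable_fst).sub (measurable_norm.comp measurable_snd))
  have hconv : measConv σ₁ σ₂ =
      Measure.map G ((volume.restrict Γ).prod (volume.restrict (sector (m+1) (k:ℤ)))) := by
    rw [measConv, hσ₁, hσ₂, Measure.map_prod_map _ _ hF₁ hF₂,
      Measure.map_map (show Measurable fun q : (Spc (m+1) × ℝ) × (Spc (m+1) × ℝ) => q.1 + q.2 from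
        measurable_fst.add measurable_snd) (hF₁.prodMap hF₂)]
    congr 1
  -- the key bound
  have hbound : ∀ A : Set (Spc (m+1) × ℝ), MeasurableSet A →
      measConv σ₁ σ₂ A ≤
        ENNReal.ofReal ((4:ℝ)^m * c0⁻¹ * r ^ (-(((m+1 : ℕ) : ℝ) - 1))) * volume A := by
    intro A hA
    set S := sector (m+1) (k:ℤ) with hSdef
    set Zset : Set (Spc (m+1) × Spc (m+1)) :=
      {p | p.2 - p.1 ∈ S ∧ ((p.2, ‖p.1‖ - ‖p.2 - p.1‖) : Spc (m+1) × ℝ) ∈ A} with hZdef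
    have hZmeas : MeasurableSet Zset := by
      refine MeasurableSet.inter ((measurable_snd.sub measurable_fst) hSmeas) ?_
      exact (measurable_snd.prodMk ((measurable_norm.comp measurable_fst).sub
        (measurable_norm.comp (measurable_snd.sub measurable_fst)))) hA
    -- step 1: measConv A as iterated integral
    have step1 : measConv σ₁ σ₂ A =
        ∫⁻ ξ, volume {u | (ξ, u) ∈ Zset} ∂(volume.restrict Γ) := by
      rw [hconv, Measure.map_apply hG hA, Measure.prod_apply (hG hA)]
      refine lintegral_congr fun ξ => ?_
      have hWmeas : MeasurableSet (Prod.mk ξ ⁻¹' (G ⁻¹' A)) := measurable_prodMk_left (hG hA)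
      rw [Measure.restrict_apply hWmeas]
      have hmp := (measurePreserving_add_left (volume : Measure (Spc (m+1))) ξ)
      have hpre : (fun η => ξ + η) ⁻¹' {u | (ξ, u) ∈ Zset} = Prod.mk ξ ⁻¹' (G ⁻¹' A) ∩ S := by
        ext η
        simp only [Set.mem_preimage, Set.mem_setOf_eq, hZdef, Set.mem_inter_iff, hGdef]
        rw [add_sub_cancel_left]
        tauto
      rw [← hpre, hmp.measure_preimage]
      have : MeasurableSet {u : Spc (m+1) | (ξ, u) ∈ Zset} := measurable_prodMk_left hZmeas
      exact this.nullMeasurableSet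
    -- step 2: swap
    have step2 : ∫⁻ ξ, volume {u | (ξ, u) ∈ Zset} ∂(volume.restrict Γ) =
        ∫⁻ u, (volume.restrict Γ) {ξ | (ξ, u) ∈ Zset} ∂(volume : Measure (Spc (m+1))) := by
      have hmeas' : Measurable fun p : Spc (m+1) × Spc (m+1) => Zset.indicator
          (fun _ => (1:ℝ≥0∞)) p := measurable_const.indicator hZmeas
      calc ∫⁻ ξ, volume {u | (ξ, u) ∈ Zset} ∂(volume.restrict Γ)
          = ∫⁻ ξ, ∫⁻ u, Zset.indicator (fun _ => (1:ℝ≥0∞)) (ξ, u) ∂volume ∂(volume.restrict Γ) := by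
            refine lintegral_congr fun ξ => ?_
            have hind : ∀ u : Spc (m+1), Zset.indicator (fun _ => (1:ℝ≥0∞)) (ξ, u) =
                ({u' : Spc (m+1) | (ξ, u') ∈ Zset}).indicator (fun _ => (1:ℝ≥0∞)) u := by
              intro u
              by_cases h : (ξ, u) ∈ Zset <;> simp [Set.indicator, h]
            simp_rw [hind]
            rw [lintegral_indicator_const
              (show MeasurableSet {u' : Spc (m+1) | (ξ, u') ∈ Zset} from
                measurable_prodMk_left hZmeas), one_mul]
        _ = ∫⁻ u, ∫⁻ ξ, Zset.indicator (fun _ => (1:ℝ≥0∞)) (ξ, u) ∂(volume.restrict Γ) ∂volume :=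
            lintegral_lintegral_swap hmeas'.aemeasurable
        _ = ∫⁻ u, (volume.restrict Γ) {ξ | (ξ, u) ∈ Zset} ∂volume := by
            refine lintegral_congr fun u => ?_
            have hind : ∀ ξ : Spc (m+1), Zset.indicator (fun _ => (1:ℝ≥0∞)) (ξ, u) =
                ({ξ' : Spc (m+1) | (ξ', u) ∈ Zset}).indicator (fun _ => (1:ℝ≥0∞)) ξ := by
              intro ξ
              by_cases h : (ξ, u) ∈ Zset <;> simp [Set.indicator, h]
            simp_rw [hind]
            rw [lintegral_indicator_const
              (show MeasurableSet {ξ' : Spc (m+1) | (ξ', u) ∈ Zset} from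
                measurable_prodMk_right hZmeas), one_mul]
    -- step 3: inner ℝ bound
    have step3 : ∀ u : Spc (m+1), (volume.restrict Γ) {ξ | (ξ, u) ∈ Zset} ≤
        ENNReal.ofReal ((4/r)^m) * (ENNReal.ofReal c0⁻¹ * volume (Prod.mk u ⁻¹' A)) := by
      intro u
      rw [Measure.restrict_apply (show MeasurableSet {ξ' : Spc (m+1) | (ξ', u) ∈ Zset} from
        measurable_prodMk_right hZmeas)]
      refine le_trans (measure_mono ?_) (Tu_bound m u ω₀ (e1 (m+1)) hω he1 hr
        (B := {τ | (u, τ) ∈ A}) (measurable_prodMk_left hA))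
      intro ξ hξ
      obtain ⟨hz, hγ⟩ := hξ
      rw [hΓ] at hγ
      obtain ⟨hg1, hg2, hg3, hg4⟩ := hγ
      simp only [Set.mem_setOf_eq, hZdef] at hz
      obtain ⟨hs, hA'⟩ := hz
      rw [hSdef, sector] at hs
      obtain ⟨hs1, hs2, hs3⟩ := hs
      have h2k : (1:ℝ) ≤ (2:ℝ)^(k:ℤ) := by rw [zpow_natCast]; exact one_le_pow₀ one_le_two
      exact ⟨hg1, hg2, hg3, hg4, hs1, le_trans h2k hs2, hA'⟩
    -- step 4: integrate
    calc measConv σ₁ σ₂ A = ∫⁻ u, (volume.restrict Γ) {ξ | (ξ, u) ∈ Zset} ∂volume := by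
          rw [step1, step2]
      _ ≤ ∫⁻ u, ENNReal.ofReal ((4/r)^m) * (ENNReal.ofReal c0⁻¹ * volume (Prod.mk u ⁻¹' A))
            ∂volume := lintegral_mono step3
      _ = ENNReal.ofReal ((4/r)^m) * ENNReal.ofReal c0⁻¹ *
            ∫⁻ u, volume (Prod.mk u ⁻¹' A) ∂volume := by
          simp_rw [← mul_assoc]
          rw [lintegral_const_mul _ (measurable_measure_prodMk_left hA)]
      _ = ENNReal.ofReal ((4/r)^m) * ENNReal.ofReal c0⁻¹ * volume A := by
          rw [Measure.volume_eq_prod, Measure.prod_apply hA]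
      _ = ENNReal.ofReal ((4:ℝ)^m * c0⁻¹ * r ^ (-(((m+1 : ℕ) : ℝ) - 1))) * volume A := by
          congr 1
          rw [← ENNReal.ofReal_mul (by positivity)]
          congr 1
          have hexp : (-(((m+1 : ℕ) : ℝ) - 1)) = -(m:ℝ) := by push_cast; ring
          rw [hexp, Real.rpow_neg hrpos.le, Real.rpow_natCast, div_pow, div_eq_mul_inv,
            mul_right_comm]
  constructor
  · refine Measure.AbsolutelyContinuous.mk fun s hs hs0 => ?_
    have hb := hbound s hs
    rw [hs0, mul_zero] at hb
    exact le_antisymm hb zero_le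
  · exact hbound

end ConeRestriction
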